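/- Let k be a field of characteristic zero, let n ≥ 1, and let w_0, …, w_n be positive integers. In k[x_1, …, x_n], set σ = x_1 + ⋯ + x_n and l_i = w_i·σ + w_0·x_i for 1 ≤ i ≤ n. Suppose a_1, …, a_n ∈ k[x_1, …, x_n] satisfy Σ_{i=1}^n a_i · (x_i^{w_i−1}·∏_{j≠i} x_j^{w_j}) · l_i = 0. Then x_i divides a_i for every i = 1, …, n. -/

import Mathlib

open MvPolynomial

/-- `X i` is prime in a multivariate polynomial ring over a field. -/
lemma prime_X_mv {k : Type*} [Field k] {τ : Type*} (i : τ) :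
    Prime (MvPolynomial.X i : MvPolynomial τ k) := by
  classical
  let e := ((renameEquiv k (Equiv.optionSubtypeNe i).symm).toRingEquiv.toMulEquiv.trans
      (optionEquivLeft k {b : τ // b ≠ i}).toRingEquiv.toMulEquiv)
  rw [← MulEquiv.prime_iff e]
  have he : e (X i) = Polynomial.X := by
    show (optionEquivLeft k _) ((renameEquiv k _) (X i)) = _
    rw [renameEquiv_apply, rename_X, Equiv.optionSubtypeNe_symm_self, optionEquivLeft_X_none]
  rw [he]
  exact Polynomial.prime_X

/-- If `∑ aᵢ · x^{w−eᵢ} · lᵢ = 0` with `lᵢ = wᵢ·(x₁+⋯+xₙ) + w₀·xᵢ`, then `xᵢ ∣ aᵢ`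
for every `i`. -/
theorem syzygy_divisibility
    (k : Type*) [Field k] [CharZero k]
    (n : ℕ) (hn : 1 ≤ n)
    (w0 : ℕ) (hw0 : 0 < w0) (w : Fin n → ℕ) (hw : ∀ i, 0 < w i)
    (σ : MvPolynomial (Fin n) k) (l : Fin n → MvPolynomial (Fin n) k)
    (hσ : σ = ∑ i, X i)
    (hl : ∀ i, l i = (w i : MvPolynomial (Fin n) k) * σ + (w0 : MvPolynomial (Fin n) k) * X i)
    (a : Fin n → MvPolynomial (Fin n) k)
    (ha : ∑ i, a i * (X i ^ (w i - 1) * ∏ j ∈ Finset.univ.erase i, X j ^ w j) * l i = 0) :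
    ∀ i, X i ∣ a i := by
  classical
  intro i
  have hXp : Prime (X i : MvPolynomial (Fin n) k) := prime_X_mv i
  set t : Fin n → MvPolynomial (Fin n) k :=
    fun j => a j * (X j ^ (w j - 1) * ∏ m ∈ Finset.univ.erase j, X m ^ w m) * l j with ht
  by_cases hne : (Finset.univ.erase i).Nonempty
  · -- main case: there is at least one other variable
    have hdvd : X i ^ w i ∣ t i := by
      have h1 : t i = -∑ j ∈ Finset.univ.erase i, t j := by
        rw [eq_neg_iff_add_eq_zero, Finset.add_sum_erase _ t (Finset.mem_univ i)]
        exact ha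
      rw [h1, dvd_neg]
      refine Finset.dvd_sum fun j hj => ?_
      have hij : i ≠ j := (Finset.ne_of_mem_erase hj).symm
      have h2 : X i ^ w i ∣ ∏ m ∈ Finset.univ.erase j, X m ^ w m :=
        Finset.dvd_prod_of_mem (fun m => (X m : MvPolynomial (Fin n) k) ^ w m) (Finset.mem_erase.2 ⟨hij, Finset.mem_univ i⟩)
      exact ((h2.mul_left _).mul_left (a j)).mul_right (l j)
    have key : X i ∣ a i * (∏ m ∈ Finset.univ.erase i, X m ^ w m) * l i := by
      have hre : t i = X i ^ (w i - 1) *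
          (a i * (∏ m ∈ Finset.univ.erase i, X m ^ w m) * l i) := by
        simp only [ht]; ring
      have hpow : (X i : MvPolynomial (Fin n) k) ^ w i = X i ^ (w i - 1) * X i := by
        conv_rhs => rw [← pow_succ]
        rw [Nat.sub_add_cancel (hw i)]
      rw [hre, hpow] at hdvd
      exact (mul_dvd_mul_iff_left (pow_ne_zero _ (X_ne_zero i))).mp hdvd
    have hnotP : ¬ (X i : MvPolynomial (Fin n) k) ∣ ∏ m ∈ Finset.univ.erase i, X m ^ w m := by
      rw [hXp.dvd_finset_prod_iff]
      rintro ⟨j, hj, hdj⟩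
      have hXX := hXp.dvd_of_dvd_pow hdj
      rw [X_dvd_X] at hXX
      exact (Finset.ne_of_mem_erase hj) hXX.symm
    -- rule out X i ∣ l i by evaluating at (0 at i, 1 elsewhere)
    set v : Fin n → k := fun m => if m = i then 0 else 1 with hv
    have hvi : v i = 0 := if_pos rfl
    have hnotl : ¬ (X i : MvPolynomial (Fin n) k) ∣ l i := by
      intro ⟨q, hq⟩
      have hz : aeval v (l i) = 0 := by rw [hq, map_mul, aeval_X, hvi, zero_mul]
      have hsum : (aeval v σ : k) = ((Finset.univ.erase i).card : k) := by
        rw [hσ, map_sum]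
        simp only [aeval_X]
        rw [← Finset.add_sum_erase _ v (Finset.mem_univ i), hvi, zero_add,
          Finset.sum_congr rfl (fun m hm => if_neg (Finset.ne_of_mem_erase hm))]
        simp
      have : aeval v (l i) = (w i : k) * ((Finset.univ.erase i).card : k) := by
        rw [hl i, map_add, map_mul, map_mul, map_natCast, map_natCast, aeval_X, hvi,
          mul_zero, add_zero, hsum]
      rw [this] at hz
      rcases mul_eq_zero.mp hz with h | h
      · exact (Nat.cast_ne_zero.mpr (hw i).ne') h
      · exact (Nat.cast_ne_zero.mpr hne.card_pos.ne') h
    rcases hXp.dvd_mul.mp key with hc | hc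
    · rcases hXp.dvd_mul.mp hc with hc' | hc'
      · exact hc'
      · exact absurd hc' hnotP
    · exact absurd hc hnotl
  · -- degenerate case n = 1 : univ = {i}
    have hempty : Finset.univ.erase i = ∅ := Finset.not_nonempty_iff_eq_empty.mp hne
    have huniv : (Finset.univ : Finset (Fin n)) = {i} := by
      rcases (Finset.erase_eq_empty_iff _ _).mp hempty with h | h
      · exact absurd (Finset.mem_univ i) (h ▸ Finset.notMem_empty i)
      · exact h
    have hti : t i = 0 := by
      have := ha
      rw [huniv, Finset.sum_singleton] at this
      exact this
    have hσi : σ = X i := by rw [hσ, huniv, Finset.sum_singleton]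
    -- l i ≠ 0 : evaluate at all-ones
    have hlne : l i ≠ 0 := by
      intro h0
      have : aeval (fun _ : Fin n => (1 : k)) (l i) = 0 := by rw [h0, map_zero]
      rw [hl i, hσi, map_add, map_mul, map_mul, map_natCast, map_natCast, aeval_X,
        mul_one, mul_one] at this
      have : ((w i + w0 : ℕ) : k) = 0 := by push_cast; exact this
      exact (Nat.cast_ne_zero.mpr (Nat.add_pos_left (hw i) w0).ne') this
    have hai : a i = 0 := by
      have := hti
      simp only [ht, hempty, Finset.prod_empty, mul_one] at this
      rcases mul_eq_zero.mp this with h | h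
      · rcases mul_eq_zero.mp h with h' | h'
        · exact h'
        · exact absurd h' (pow_ne_zero _ (X_ne_zero i))
      · exact absurd h hlne
    rw [hai]
    exact dvd_zero _
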